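/- Let B be a real p×q matrix with p ≥ q ≥ 1 and n ≥ 1. Then the ((n+1)p)-square matrices D ⊕ 0_{p−q} and C ⊕ (J−I)_n ⊕ ⋯ ⊕ (J−I)_n (with p − q copies of (J−I)_n) are cospectral, i.e., they have the same characteristic polynomial (after transporting along a bijection of their index types, both of cardinality (n+1)p). -/

import Mathlib

open Matrix Kronecker Polynomial

noncomputable section

def Jmat (n : ℕ) : Matrix (Fin n) (Fin n) ℝ := of fun _ _ => 1

lemma Jmat_mul_Jmat (n : ℕ) : Jmat n * Jmat n = (n : ℝ) • Jmat n := by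
  ext i j; simp [Jmat, mul_apply]

lemma my_eval_charpoly {m : Type*} [Fintype m] [DecidableEq m] (M : Matrix m m ℝ) (x : ℝ) :
    M.charpoly.eval x = (x • (1 : Matrix m m ℝ) - M).det := by
  rw [Matrix.charpoly, ← Polynomial.coe_evalRingHom, RingHom.map_det]
  congr 1
  ext i j
  by_cases h : i = j <;>
    simp [charmatrix_apply, h, Matrix.one_apply, Matrix.diagonal_apply]

lemma det_smul_one_sub_J (n : ℕ) (hn : 1 ≤ n) (a : ℝ) (ha : a ≠ 0) :
    (a • (1 : Matrix (Fin n) (Fin n) ℝ) - Jmat n).det = a ^ (n - 1) * (a - n) := by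
  have key : a • (1 : Matrix (Fin n) (Fin n) ℝ) - Jmat n
      = a • (1 + replicateCol Unit (fun _ => -a⁻¹) * replicateRow Unit (fun _ => (1 : ℝ))) := by
    ext i j
    simp only [Jmat, Matrix.sub_apply, Matrix.smul_apply, Matrix.add_apply, mul_apply,
      Matrix.replicateCol_apply, Matrix.replicateRow_apply, of_apply, smul_eq_mul,
      Fintype.sum_unique, Matrix.one_apply]
    by_cases h : i = j <;> field_simp [h, Matrix.one_apply] <;> ring
  rw [key, det_smul, det_one_add_replicateCol_mul_replicateRow]
  have hc : (fun _ : Fin n => (1:ℝ)) ⬝ᵥ (fun _ => -a⁻¹) = -(n * a⁻¹) := by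
    simp [dotProduct, Finset.sum_const]
  rw [hc]
  have hn' : n - 1 + 1 = n := Nat.succ_pred_eq_of_pos hn
  have h2 : a ^ Fintype.card (Fin n) = a ^ (n-1) * a := by
    rw [Fintype.card_fin, ← pow_succ, hn']
  rw [h2]
  field_simp
  ring

lemma inv_smul_one_sub_J (n : ℕ) (a : ℝ) (ha : a ≠ 0) (han : a - n ≠ 0) :
    (a • (1 : Matrix (Fin n) (Fin n) ℝ) - Jmat n) *
      (a⁻¹ • 1 + (a * (a - n))⁻¹ • Jmat n) = 1 := by
  rw [Matrix.sub_mul, Matrix.mul_add, Matrix.mul_add]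
  simp only [smul_mul_assoc, Matrix.mul_smul, Matrix.one_mul, Matrix.mul_one,
    Jmat_mul_Jmat, smul_smul]
  match_scalars <;> field_simp <;> ring

def genMat (n m r : ℕ) (A : Matrix (Fin m) (Fin r) ℝ) :
    Matrix (Fin m ⊕ Fin n × Fin r) (Fin m ⊕ Fin n × Fin r) ℝ :=
  fromBlocks 0 (of fun j ki => A j ki.2) (of fun ki j => A j ki.2)
    ((Jmat n - 1) ⊗ₖ (1 : Matrix (Fin r) (Fin r) ℝ))

lemma UML (n m r : ℕ) (A : Matrix (Fin m) (Fin r) ℝ) (M : Matrix (Fin n) (Fin n) ℝ) :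
    (of fun (j : Fin m) (ki : Fin n × Fin r) => A j ki.2) *
      ((M ⊗ₖ (1 : Matrix (Fin r) (Fin r) ℝ)) *
        (of fun (ki : Fin n × Fin r) (j : Fin m) => A j ki.2)) =
    (∑ k, ∑ k', M k k') • (A * Aᵀ) := by
  ext j j'
  simp only [mul_apply, of_apply, kroneckerMap_apply, Matrix.smul_apply, transpose_apply,
    Fintype.sum_prod_type, Matrix.one_apply, mul_ite, mul_one, mul_zero, ite_mul, zero_mul,
    Finset.sum_ite_eq, Finset.mem_univ, if_true, smul_eq_mul]
  rw [Finset.mul_sum]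
  rw [Finset.sum_comm]
  congr 1; ext i
  rw [Finset.sum_mul]
  congr 1; ext k
  rw [Finset.mul_sum, Finset.sum_mul]
  congr 1; ext k'
  ring

lemma eval_gen (n m r : ℕ) (hn : 1 ≤ n) (A : Matrix (Fin m) (Fin r) ℝ) (x : ℝ)
    (ha : x + 1 ≠ 0) (han : x + 1 - n ≠ 0) :
    (x + 1 - n) ^ m * (x • 1 - genMat n m r A).det =
      ((x + 1) ^ (n - 1) * (x + 1 - n)) ^ r *
        ((x * (x + 1 - n)) • (1 : Matrix (Fin m) (Fin m) ℝ) - (n : ℝ) • (A * Aᵀ)).det := by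
  set a := x + 1 with ha_def
  have hblock : x • (1 : Matrix (Fin m ⊕ Fin n × Fin r) (Fin m ⊕ Fin n × Fin r) ℝ)
        - genMat n m r A =
      fromBlocks (x • 1) (-(of fun j ki => A j ki.2)) (-(of fun ki j => A j ki.2))
        ((a • 1 - Jmat n) ⊗ₖ (1 : Matrix (Fin r) (Fin r) ℝ)) := by
    ext i j
    rcases i with i | ⟨k, i⟩ <;> rcases j with j | ⟨k', j⟩ <;>
      simp [genMat, fromBlocks, Matrix.one_apply, Jmat, Prod.ext_iff] <;>
      split_ifs <;> simp_all <;> ring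
  set E := (a⁻¹ • 1 + (a * (a - n))⁻¹ • Jmat n) ⊗ₖ (1 : Matrix (Fin r) (Fin r) ℝ) with hE
  have hDE : ((a • 1 - Jmat n) ⊗ₖ (1 : Matrix (Fin r) (Fin r) ℝ)) * E = 1 := by
    rw [hE, ← mul_kronecker_mul, inv_smul_one_sub_J n a ha han, Matrix.one_mul,
      one_kronecker_one]
  haveI : Invertible ((a • 1 - Jmat n) ⊗ₖ (1 : Matrix (Fin r) (Fin r) ℝ)) :=
    invertibleOfRightInverse _ _ hDE
  rw [hblock, det_fromBlocks₂₂, invOf_eq_right_inv hDE]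
  have hsum : (∑ k, ∑ k', (a⁻¹ • (1 : Matrix (Fin n) (Fin n) ℝ)
      + (a * (a - n))⁻¹ • Jmat n) k k') = (n : ℝ) / (a - n) := by
    simp only [Matrix.add_apply, Matrix.smul_apply, Matrix.one_apply, Jmat, Matrix.of_apply,
      smul_eq_mul, mul_ite, mul_one, mul_zero, Finset.sum_add_distrib, Finset.sum_ite_eq,
      Finset.mem_univ, if_true, Finset.sum_const, Finset.card_univ, Fintype.card_fin,
      nsmul_eq_mul]
    field_simp
    ring
  have hSchur : x • (1 : Matrix (Fin m) (Fin m) ℝ)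
      - -(of fun (j : Fin m) (ki : Fin n × Fin r) => A j ki.2) * E
        * -(of fun (ki : Fin n × Fin r) (j : Fin m) => A j ki.2)
      = x • 1 - ((n : ℝ) / (a - n)) • (A * Aᵀ) := by
    simp only [Matrix.neg_mul, Matrix.mul_neg, neg_neg]
    rw [Matrix.mul_assoc, hE, UML n m r A, hsum]
  rw [hSchur]
  have hdetK : (((a • 1 - Jmat n) ⊗ₖ (1 : Matrix (Fin r) (Fin r) ℝ)).det)
      = ((a : ℝ) ^ (n - 1) * (a - n)) ^ r := by
    rw [det_kronecker, det_one, one_pow, mul_one, det_smul_one_sub_J n hn a ha,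
      Fintype.card_fin]
  rw [hdetK]
  have hfinal : ((x * (a - n)) • (1 : Matrix (Fin m) (Fin m) ℝ) - (n : ℝ) • (A * Aᵀ)).det
      = (a - n) ^ m * ((x • (1 : Matrix (Fin m) (Fin m) ℝ)
        - ((n : ℝ) / (a - n)) • (A * Aᵀ)).det) := by
    have hmat : (x * (a - n)) • (1 : Matrix (Fin m) (Fin m) ℝ) - (n : ℝ) • (A * Aᵀ)
        = (a - n) • (x • (1 : Matrix (Fin m) (Fin m) ℝ) - ((n : ℝ) / (a - n)) • (A * Aᵀ)) := by
      rw [smul_sub, smul_smul, smul_smul]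
      congr 2
      · ring
      · field_simp
    rw [hmat, Matrix.det_smul, Fintype.card_fin]
  rw [hfinal]
  ring

lemma det_third (n s : ℕ) (hn : 1 ≤ n) (x : ℝ) (ha : x + 1 ≠ 0) :
    (x • (1 : Matrix (Fin s × Fin n) (Fin s × Fin n) ℝ)
      - of fun ai a'i' : Fin s × Fin n =>
          if ai.1 = a'i'.1 ∧ ai.2 ≠ a'i'.2 then (1 : ℝ) else 0).det
    = ((x + 1) ^ (n - 1) * (x + 1 - n)) ^ s := by
  have hmat : x • (1 : Matrix (Fin s × Fin n) (Fin s × Fin n) ℝ)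
      - (of fun ai a'i' : Fin s × Fin n =>
          if ai.1 = a'i'.1 ∧ ai.2 ≠ a'i'.2 then (1 : ℝ) else 0)
      = (1 : Matrix (Fin s) (Fin s) ℝ) ⊗ₖ ((x + 1) • 1 - Jmat n) := by
    ext ⟨u, i⟩ ⟨v, j⟩
    simp [Matrix.one_apply, Jmat, kroneckerMap_apply, Prod.ext_iff]
    by_cases hu : u = v <;> by_cases hi : i = j <;> simp [hu, hi] <;> ring
  rw [hmat, det_kronecker, det_one, one_pow, one_mul, det_smul_one_sub_J n hn _ ha,
    Fintype.card_fin]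

lemma det_shift (n p q : ℕ) (hpq : q ≤ p) (B : Matrix (Fin p) (Fin q) ℝ) (μ : ℝ)
    (hμ : μ ≠ 0) :
    (μ • (1 : Matrix (Fin p) (Fin p) ℝ) - (n : ℝ) • (B * Bᵀ)).det * μ ^ q =
      μ ^ p * (μ • (1 : Matrix (Fin q) (Fin q) ℝ) - (n : ℝ) • (Bᵀ * B)).det := by
  have key : ∀ (m : ℕ) (M : Matrix (Fin m) (Fin m) ℝ),
      μ • (1 : Matrix (Fin m) (Fin m) ℝ) - (n : ℝ) • M
        = μ • (1 + (-(n / μ)) • M) := by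
    intro m M
    rw [smul_add, smul_smul, sub_eq_add_neg]
    congr 1
    rw [← neg_smul]
    congr 1
    field_simp
  have h2 : (1 : Matrix (Fin p) (Fin p) ℝ) + (-(n / μ)) • (B * Bᵀ)
      = 1 + ((-(n / μ)) • B) * Bᵀ := by rw [Matrix.smul_mul]
  have h3 : (1 : Matrix (Fin q) (Fin q) ℝ) + (-(n / μ)) • (Bᵀ * B)
      = 1 + Bᵀ * ((-(n / μ)) • B) := by rw [Matrix.mul_smul]
  rw [key p (B * Bᵀ), key q (Bᵀ * B), h2, h3, Matrix.det_smul, Matrix.det_smul,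
    Fintype.card_fin, Fintype.card_fin, det_one_add_mul_comm]
  ring

lemma smul_one_sub_fromBlocks {α β : Type*} [Fintype α] [Fintype β] [DecidableEq α]
    [DecidableEq β] (x : ℝ) (M : Matrix α α ℝ) (N : Matrix β β ℝ) :
    x • (1 : Matrix (α ⊕ β) (α ⊕ β) ℝ) - fromBlocks M 0 0 N
      = fromBlocks (x • 1 - M) 0 0 (x • 1 - N) := by
  rw [← fromBlocks_one, fromBlocks_smul]
  ext i j
  rcases i with i | i <;> rcases j with j | j <;> simp [fromBlocks]

end

open Matrix


open Matrix

/-- The matrix `C` of Construction III: indexed by `Fin p ⊕ (Fin n × Fin q)`,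
first block row `[0, B, …, B]`, and the `n×n` grid of `q×q` blocks has zero diagonal blocks
and identity blocks `I_q` off the diagonal. -/
def matC3 (p q n : ℕ) (B : Matrix (Fin p) (Fin q) ℝ) :
    Matrix (Fin p ⊕ Fin n × Fin q) (Fin p ⊕ Fin n × Fin q) ℝ :=
  Matrix.of fun a b =>
    match a, b with
    | Sum.inl i, Sum.inr (_, j) => B i j
    | Sum.inr (_, j), Sum.inl i => B i j
    | Sum.inr (k, j), Sum.inr (k', j') => if k ≠ k' ∧ j = j' then 1 else 0
    | _, _ => 0

/-- The matrix `D` of Construction III: indexed by `Fin q ⊕ (Fin n × Fin p)`,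
first block row `[0, Bᵀ, …, Bᵀ]`, and the `n×n` grid of `p×p` blocks has zero diagonal blocks
and identity blocks `I_p` off the diagonal. -/
def matD3 (p q n : ℕ) (B : Matrix (Fin p) (Fin q) ℝ) :
    Matrix (Fin q ⊕ Fin n × Fin p) (Fin q ⊕ Fin n × Fin p) ℝ :=
  Matrix.of fun a b =>
    match a, b with
    | Sum.inl j, Sum.inr (_, i) => B i j
    | Sum.inr (_, i), Sum.inl j => B i j
    | Sum.inr (k, i), Sum.inr (k', i') => if k ≠ k' ∧ i = i' then 1 else 0
    | _, _ => 0

lemma matC3_eq_genMat (p q n : ℕ) (B : Matrix (Fin p) (Fin q) ℝ) :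
    matC3 p q n B = genMat n p q B := by
  ext i j
  rcases i with i | ⟨k, i⟩ <;> rcases j with j | ⟨k', j⟩ <;>
    simp [matC3, genMat, Matrix.fromBlocks, Jmat, Matrix.kroneckerMap_apply, Matrix.one_apply,
      Prod.ext_iff] <;> split_ifs <;> simp_all

lemma matD3_eq_genMat (p q n : ℕ) (B : Matrix (Fin p) (Fin q) ℝ) :
    matD3 p q n B = genMat n q p Bᵀ := by
  ext i j
  rcases i with i | ⟨k, i⟩ <;> rcases j with j | ⟨k', j⟩ <;>
    simp [matD3, genMat, Matrix.fromBlocks, Jmat, Matrix.kroneckerMap_apply, Matrix.one_apply,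
      Prod.ext_iff] <;> split_ifs <;> simp_all

/-- Construction III: the `(n+1)p`-square matrices `D ⊕ 0_{p−q}` and
`C ⊕ (J−I)_n ⊕ ⋯ ⊕ (J−I)_n` (with `p − q` copies of `(J−I)_n`) are cospectral. Here the
`p − q` copies of `(J−I)_n` form a block-diagonal matrix indexed by `Fin (p−q) × Fin n`. -/
theorem construction_III_cospectral (p q n : ℕ) (hq : 1 ≤ q) (hpq : q ≤ p) (hn : 1 ≤ n)
    (B : Matrix (Fin p) (Fin q) ℝ) :
    ∃ e : ((Fin q ⊕ Fin n × Fin p) ⊕ Fin (p - q)) ≃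
        ((Fin p ⊕ Fin n × Fin q) ⊕ Fin (p - q) × Fin n),
      (Matrix.fromBlocks (matD3 p q n B) 0 0
          (0 : Matrix (Fin (p - q)) (Fin (p - q)) ℝ)).charpoly =
        ((Matrix.fromBlocks (matC3 p q n B) 0 0
            (Matrix.of fun ai a'i' : Fin (p - q) × Fin n =>
              if ai.1 = a'i'.1 ∧ ai.2 ≠ a'i'.2 then (1 : ℝ) else 0)).submatrix e
          e).charpoly := by
  have hcard : Fintype.card ((Fin q ⊕ Fin n × Fin p) ⊕ Fin (p - q))
      = Fintype.card ((Fin p ⊕ Fin n × Fin q) ⊕ Fin (p - q) × Fin n) := by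
    simp only [Fintype.card_sum, Fintype.card_prod, Fintype.card_fin]
    zify [hpq]
    ring
  obtain ⟨e⟩ : Nonempty (((Fin q ⊕ Fin n × Fin p) ⊕ Fin (p - q)) ≃
      ((Fin p ⊕ Fin n × Fin q) ⊕ Fin (p - q) × Fin n)) := ⟨Fintype.equivOfCardEq hcard⟩
  refine ⟨e, ?_⟩
  rw [show ∀ M : Matrix ((Fin p ⊕ Fin n × Fin q) ⊕ Fin (p - q) × Fin n)
      ((Fin p ⊕ Fin n × Fin q) ⊕ Fin (p - q) × Fin n) ℝ, M.submatrix e e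
        = reindex e.symm e.symm M from fun M => by rw [reindex_apply, Equiv.symm_symm],
    Matrix.charpoly_reindex]
  apply Polynomial.eq_of_infinite_eval_eq
  have hfin : ({0, -1, (n : ℝ) - 1} : Set ℝ).Finite := Set.toFinite _
  refine Set.Infinite.mono ?_ hfin.infinite_compl
  intro x hx
  simp only [Set.mem_compl_iff, Set.mem_insert_iff, Set.mem_singleton_iff, not_or] at hx
  obtain ⟨hx0, hx1, hxn⟩ := hx
  have ha : x + 1 ≠ 0 := fun h => hx1 (by linarith)
  have han : x + 1 - (n : ℝ) ≠ 0 := fun h => hxn (by linarith)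
  have hμ : x * (x + 1 - (n : ℝ)) ≠ 0 := mul_ne_zero hx0 han
  simp only [Set.mem_setOf_eq]
  rw [my_eval_charpoly, my_eval_charpoly, smul_one_sub_fromBlocks, smul_one_sub_fromBlocks,
    Matrix.det_fromBlocks_zero₂₁, Matrix.det_fromBlocks_zero₂₁]
  rw [det_third n (p - q) hn x ha]
  rw [sub_zero, Matrix.det_smul, det_one, Fintype.card_fin, mul_one]
  rw [matC3_eq_genMat, matD3_eq_genMat]
  -- main algebra
  have h1 := eval_gen n q p hn Bᵀ x ha han
  have h2 := eval_gen n p q hn B x ha han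
  rw [transpose_transpose] at h1
  have h3 := det_shift n p q hpq B (x * (x + 1 - (n : ℝ))) hμ
  set t : ℝ := x + 1 - (n : ℝ) with ht
  set K : ℝ := (x + 1) ^ (n - 1) * t with hK
  set dD : ℝ := (x • 1 - genMat n q p Bᵀ).det with hdD
  set dC : ℝ := (x • 1 - genMat n p q B).det with hdC
  set g : ℝ := ((x * t) • 1 - (n : ℝ) • (Bᵀ * B)).det with hg
  set f : ℝ := ((x * t) • 1 - (n : ℝ) • (B * Bᵀ)).det with hf
  -- h1 : t^q * dD = K^p * g ; h2 : t^p * dC = K^q * f ; h3 : f * μ^q = μ^p * g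
  set d : ℕ := p - q with hd
  have hp : p = q + d := by omega
  have e1 : K ^ p = K ^ q * K ^ d := by rw [hp, pow_add]
  have e2 : t ^ p = t ^ q * t ^ d := by rw [hp, pow_add]
  have e3 : (x * t) ^ p = (x * t) ^ q * (x * t) ^ d := by rw [hp, pow_add]
  rw [e1] at h1
  rw [e2] at h2
  rw [e3, mul_pow x t d] at h3
  have hcancel : t ^ q * t ^ q * t ^ d * (x * t) ^ q ≠ 0 := by
    apply mul_ne_zero
    apply mul_ne_zero
    apply mul_ne_zero
    all_goals positivity
  apply mul_left_cancel₀ hcancel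
  linear_combination (t ^ d * (x * t) ^ q * x ^ d * t ^ q) * h1
    - (t ^ q * (x * t) ^ q * K ^ d) * h2 - (t ^ q * K ^ d * K ^ q) * h3
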